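/- Let H be an N×K complex matrix admitting a compact singular value decomposition H = U · diag(s) · Vᴴ, where U is an N×K complex matrix with Uᴴ U = I, V is a K×K unitary matrix, and s : Fin K → ℝ has s i > 0 for every i. Then HᴴH is invertible and the zero-forcing precoder satisfies H · (HᴴH)⁻¹ = U · diag(s⁻¹) · Vᴴ, where diag(s⁻¹) is the diagonal matrix with entries 1/(s i). -/

import Mathlib

open Matrix

/-- SVD form of the zero-forcing precoder:
if `H = U * diag s * Vᴴ` is a compact SVD with positive singular values,
then `HᴴH` is invertible and `H * (Hᴴ * H)⁻¹ = U * diag s⁻¹ * Vᴴ`. -/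
theorem zf_precoder_svd (N K : ℕ)
    (H : Matrix (Fin N) (Fin K) ℂ)
    (U : Matrix (Fin N) (Fin K) ℂ)
    (V : Matrix (Fin K) (Fin K) ℂ) (hV : V ∈ Matrix.unitaryGroup (Fin K) ℂ)
    (s : Fin K → ℝ) (hs : ∀ i, 0 < s i)
    (hU : Uᴴ * U = 1)
    (hH : H = U * Matrix.diagonal (fun i => (s i : ℂ)) * Vᴴ) :
    IsUnit (Hᴴ * H) ∧
    H * (Hᴴ * H)⁻¹ = U * Matrix.diagonal (fun i => (1 / (s i : ℂ))) * Vᴴ := by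
  have hs0 : ∀ i, (s i : ℂ) ≠ 0 := fun i => by
    exact_mod_cast (hs i).ne'
  have hVV : Vᴴ * V = 1 := hV.1
  have hVV' : V * Vᴴ = 1 := (Matrix.mem_unitaryGroup_iff.mp hV)
  set D : Matrix (Fin K) (Fin K) ℂ := Matrix.diagonal (fun i => (s i : ℂ)) with hD
  have hDH : Dᴴ = D := by
    simp [hD, diagonal_conjTranspose, Function.comp]
  have hHH : Hᴴ * H = V * (D * D) * Vᴴ := by
    subst hH
    simp only [conjTranspose_mul, conjTranspose_conjTranspose, hDH]
    simp only [Matrix.mul_assoc]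
    rw [← Matrix.mul_assoc Uᴴ U, hU, Matrix.one_mul]
  set E : Matrix (Fin K) (Fin K) ℂ :=
    Matrix.diagonal (fun i => (1 / (s i : ℂ)) * (1 / (s i : ℂ))) with hE
  have hfun : (fun i => (s i : ℂ) * (s i : ℂ) * ((1 / (s i : ℂ)) * (1 / (s i : ℂ)))) =
      fun _ => (1 : ℂ) := by
    funext i; field_simp; exact div_self (hs0 i)
  have hfun' : (fun i => (1 / (s i : ℂ)) * (1 / (s i : ℂ)) * ((s i : ℂ) * (s i : ℂ))) =
      fun _ => (1 : ℂ) := by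
    funext i; field_simp; exact div_self (hs0 i)
  have hDE : (D * D) * E = 1 := by
    simp only [hD, hE, diagonal_mul_diagonal, hfun, diagonal_one]
  have hED : E * (D * D) = 1 := by
    simp only [hD, hE, diagonal_mul_diagonal, hfun', diagonal_one]
  have hinv : (Hᴴ * H) * (V * E * Vᴴ) = 1 := by
    rw [hHH]
    simp only [Matrix.mul_assoc]
    rw [← Matrix.mul_assoc Vᴴ V, hVV, Matrix.one_mul,
      ← Matrix.mul_assoc D D, ← Matrix.mul_assoc (D * D) E, hDE, Matrix.one_mul, hVV']
  have hinv' : (V * E * Vᴴ) * (Hᴴ * H) = 1 := by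
    rw [hHH]
    simp only [Matrix.mul_assoc]
    rw [← Matrix.mul_assoc Vᴴ V, hVV, Matrix.one_mul,
      ← Matrix.mul_assoc D D, ← Matrix.mul_assoc E (D * D), hED, Matrix.one_mul, hVV']
  have hUnit : IsUnit (Hᴴ * H) := ⟨⟨Hᴴ * H, V * E * Vᴴ, hinv, hinv'⟩, rfl⟩
  refine ⟨hUnit, ?_⟩
  have hinveq : (Hᴴ * H)⁻¹ = V * E * Vᴴ := Matrix.inv_eq_right_inv hinv
  rw [hinveq, hH]
  have hDEd : D * E = Matrix.diagonal (fun i => (1 / (s i : ℂ))) := by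
    simp only [hD, hE, diagonal_mul_diagonal]
    funext i
    field_simp
  simp only [Matrix.mul_assoc]
  rw [← Matrix.mul_assoc Vᴴ V, hVV, Matrix.one_mul, ← Matrix.mul_assoc D E, hDEd]
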